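/- Let U be a vector space with a single left symmetric product ·. Define on T(U) = U × U the product (X,Y)·(Z,T) = (X·Z + Y·Z, Y·T + X·T). Then this product on T(U) is left symmetric. -/
import Mathlib


variable {k U : Type*} [Field k] [AddCommGroup U] [Module k U]

/-- The product `(X,Y)·(Z,T) = (X·Z + Y·Z, Y·T + X·T)` on `T(U) = U × U`. -/
def tProd (mul : U →ₗ[k] U →ₗ[k] U) (p q : U × U) : U × U :=
  (mul p.1 q.1 + mul p.2 q.1, mul p.2 q.2 + mul p.1 q.2)

/-- If `(U,·)` is left symmetric, then the product on `T(U) = U × U` is left symmetric. -/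
theorem tProd_leftSymmetric (mul : U →ₗ[k] U →ₗ[k] U)
    (hls : ∀ u v w : U,
      mul (mul u v) w - mul u (mul v w) = mul (mul v u) w - mul v (mul u w))
    (p q r : U × U) :
    tProd mul (tProd mul p q) r - tProd mul p (tProd mul q r)
      = tProd mul (tProd mul q p) r - tProd mul q (tProd mul p r) := by
  obtain ⟨a,b⟩ := p; obtain ⟨c,d⟩ := q; obtain ⟨e,f⟩ := r
  simp only [tProd, Prod.mk_sub_mk, map_add, LinearMap.add_apply, Prod.mk.injEq]
  refine ⟨?_, ?_⟩
  · linear_combination (norm := abel) hls a c e + hls a d e + hls b c e + hls b d e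
  · linear_combination (norm := abel) hls a c f + hls a d f + hls b c f + hls b d f
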